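/- If q' ≥ 2 with (q' : G) ∈ N_{p,q·q'}, and the division sequence C_{p,q} has a single equivalence class (every positive integer is E_{p,q}-equivalent to 1), then N_{p,q·q'} = ⊤, i.e., the quotient group H_{p,q·q'} is trivial. -/

import Mathlib

abbrev G : Type := {x : ℚ // 0 < x}

def toG (c : ℕ+) : G := ⟨(c : ℚ), by exact_mod_cast c.pos⟩

def Cmap (p q : ℕ+) (c : ℕ+) : ℕ+ :=
  if h : (q : ℕ) ∣ (c : ℕ) then
    ⟨(c : ℕ) / (q : ℕ), Nat.div_pos (Nat.le_of_dvd c.pos h) q.pos⟩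
  else p * c + 1

def E (p q : ℕ+) : ℕ+ → ℕ+ → Prop := Relation.EqvGen (fun c d => d = Cmap p q c)

def Npq (p q : ℕ+) : Subgroup G :=
  Subgroup.closure ({toG q} ∪ {x : G | ∃ c d : ℕ+, E p q c d ∧ x = toG c / toG d})

lemma toG_mul (a b : ℕ+) : toG (a * b) = toG a * toG b := by
  apply Subtype.ext
  simp [toG]

lemma toG_one : toG 1 = 1 := by
  apply Subtype.ext
  simp [toG]

theorem stmt11 (p q q' : ℕ+) (hp : 1 ≤ p) (hq : 2 ≤ q) (hq' : 2 ≤ q')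
    (h : toG q' ∈ Npq p (q * q')) (hone : ∀ c : ℕ+, E p q c 1) :
    Npq p (q * q') = ⊤ ∧ Subsingleton (G ⧸ Npq p (q * q')) := by
  have hqq' : toG (q * q') ∈ Npq p (q * q') :=
    Subgroup.subset_closure (Set.mem_union_left _ rfl)
  have hqmem : toG q ∈ Npq p (q * q') := by
    have : toG q = toG (q * q') * (toG q')⁻¹ := by
      rw [toG_mul]; group
    rw [this]
    exact mul_mem hqq' (inv_mem h)
  have key : ∀ c d : ℕ+, E p q c d → toG c / toG d ∈ Npq p (q * q') := by
    intro c d hcd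
    induction hcd with
    | rel c d hrel =>
      by_cases hdvd : (q : ℕ) ∣ (c : ℕ)
      · -- dividing step: c / d = q
        obtain ⟨k, hk⟩ := hdvd
        have hk0 : 0 < k := by
          rcases Nat.eq_zero_or_pos k with rfl | h0
          · rw [mul_zero] at hk; exact absurd hk c.pos.ne'
          · exact h0
        have hdvd2 : (q : ℕ) ∣ (c : ℕ) := ⟨k, hk⟩
        have hcdiv : (c : ℕ) / (q : ℕ) = k := by
          rw [hk, Nat.mul_div_cancel_left _ q.pos]
        have hd : toG c / toG d = toG q := by
          subst hrel
          have hC : Cmap p q c = ⟨(c : ℕ) / (q : ℕ), Nat.div_pos (Nat.le_of_dvd c.pos hdvd2) q.pos⟩ := dif_pos hdvd2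
          rw [hC]
          apply Subtype.ext
          simp only [toG, Cmap, dif_pos hdvd2]
          show (c : ℚ) / ((((c : ℕ) / (q : ℕ) : ℕ) : ℚ)) = (q : ℚ)
          rw [hcdiv, hk]
          push_cast
          have hk' : (k : ℚ) ≠ 0 := by exact_mod_cast hk0.ne'
          field_simp
        rw [hd]; exact hqmem
      · -- p*c+1 step, also a step for q*q'
        have hdvd' : ¬ ((q * q' : ℕ+) : ℕ) ∣ (c : ℕ) := by
          intro hc
          exact hdvd (dvd_trans (Dvd.intro _ rfl) hc)
        have hstep : d = Cmap p (q * q') c := by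
          subst hrel
          simp only [Cmap, dif_neg hdvd, dif_neg hdvd']
          exact (dif_neg hdvd).trans (dif_neg (e := fun _ => p * c + 1) hdvd').symm
        exact Subgroup.subset_closure (Set.mem_union_right _
          ⟨c, d, Relation.EqvGen.rel _ _ hstep, rfl⟩)
    | refl c => rw [div_self']; exact one_mem _
    | symm c d _ ih =>
      rw [← inv_div]
      exact inv_mem ih
    | trans c d e _ _ ih1 ih2 =>
      have heq : toG c / toG e = (toG c / toG d) * (toG d / toG e) := by
        rw [div_mul_div_comm]
        apply Subtype.ext
        have h1 : (toG d).val ≠ 0 := ne_of_gt (toG d).2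
        have h2 : (toG e).val ≠ 0 := ne_of_gt (toG e).2
        show (toG c).val / (toG e).val = (toG c).val * (toG d).val / ((toG d).val * (toG e).val)
        field_simp
      rw [heq]; exact mul_mem ih1 ih2
  have hall : ∀ c : ℕ+, toG c ∈ Npq p (q * q') := by
    intro c
    have := key c 1 (hone c)
    rwa [toG_one, div_one] at this
  have htop : Npq p (q * q') = ⊤ := by
    rw [eq_top_iff]
    rintro ⟨r, hr⟩ _
    have hnum : 0 < r.num := Rat.num_pos.mpr hr
    have hden : 0 < r.den := r.pos
    set n : ℕ+ := ⟨r.num.toNat, by omega⟩ with hn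
    set m : ℕ+ := ⟨r.den, hden⟩ with hm
    have hx : (⟨r, hr⟩ : G) = toG n / toG m := by
      apply Subtype.ext
      show r = (toG n).val / (toG m).val
      show r = ((r.num.toNat : ℕ) : ℚ) / ((r.den : ℕ) : ℚ)
      rw [show ((r.num.toNat : ℕ) : ℚ) = (r.num : ℚ) by exact_mod_cast Int.toNat_of_nonneg hnum.le,
        Rat.num_div_den]
    rw [hx]
    exact div_mem (hall n) (hall m)
  refine ⟨htop, ?_⟩
  rw [htop]
  exact QuotientGroup.subsingleton_quotient_top
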